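/- Let B be an n×n exchange matrix. Then the mutation fan ℱ_B is a complete fan: every element of ℱ_B is a closed convex cone, every face of a cone in ℱ_B is in ℱ_B, the intersection of any two cones in ℱ_B is a face of each of the two, and the union of the cones in ℱ_B is all of ℝ^n. -/
import Mathlib


open scoped BigOperators

namespace MutationFanPaper

/-- An exchange matrix: a skew-symmetrizable `n × n` integer matrix. -/
def IsExchangeMatrix {n : ℕ} (B : Matrix (Fin n) (Fin n) ℤ) : Prop :=
  ∃ d : Fin n → ℤ, (∀ i, 0 < d i) ∧ ∀ i j, d i * B i j = -(d j * B j i)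

/-- Matrix mutation in direction `k`. -/
def mutate {n : ℕ} (B : Matrix (Fin n) (Fin n) ℤ) (k : Fin n) : Matrix (Fin n) (Fin n) ℤ :=
  fun i j =>
    if i = k ∨ j = k then -B i j
    else B i j + Int.sign (B k j) * max (B i k * B k j) 0

/-- The mutation map `η_k^B : ℝⁿ → ℝⁿ`. -/
noncomputable def etaStep {n : ℕ} (B : Matrix (Fin n) (Fin n) ℤ) (k : Fin n) (a : Fin n → ℝ) : Fin n → ℝ :=
  fun j =>
    if j = k then -a k
    else if 0 ≤ a k ∧ 0 ≤ B k j then a j + a k * (B k j : ℝ)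
    else if a k ≤ 0 ∧ B k j ≤ 0 then a j - a k * (B k j : ℝ)
    else a j

/-- `etaSeq B κ` is the mutation map `η_κ^B`, where the list `κ` records the indices in
order of application (the head of the list is applied first, using the matrix `B` itself). -/
noncomputable def etaSeq {n : ℕ} (B : Matrix (Fin n) (Fin n) ℤ) : List (Fin n) → (Fin n → ℝ) → Fin n → ℝ
  | [], a => a
  | k :: κ, a => etaSeq (mutate B k) κ (etaStep B k a)

/-- Iterated matrix mutation along a list of indices; the head is applied first. -/
def mutateSeq {n : ℕ} (B : Matrix (Fin n) (Fin n) ℤ) : List (Fin n) → Matrix (Fin n) (Fin n) ℤ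
  | [] => B
  | k :: κ => mutateSeq (mutate B k) κ

/-- The copy of ℤ inside ℝ, as a subring. -/
def intSR : Subring ℝ := (Int.castRingHom ℝ).range

/-- The copy of ℚ inside ℝ, as a subring. -/
noncomputable def ratSR : Subring ℝ := (Rat.castHom ℝ).range

/-- The formal expression `Σ_{i ∈ S} c i • v i` is a `B`-coherent linear relation. -/
def IsBCoherentRel {n : ℕ} (B : Matrix (Fin n) (Fin n) ℤ) {ι : Type*} (S : Finset ι)
    (v : ι → Fin n → ℝ) (c : ι → ℝ) : Prop :=
  ∀ κ : List (Fin n),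
    (∑ i ∈ S, c i • etaSeq B κ (v i)) = 0 ∧
    (∑ i ∈ S, c i • (fun j => min (etaSeq B κ (v i) j) 0)) = 0

/-- The formal expression `a - Σ_{i ∈ S} c i • v i` is a `B`-coherent linear relation. -/
def IsBCoherentDiff {n : ℕ} (B : Matrix (Fin n) (Fin n) ℤ) (a : Fin n → ℝ) {ι : Type*}
    (S : Finset ι) (v : ι → Fin n → ℝ) (c : ι → ℝ) : Prop :=
  ∀ κ : List (Fin n),
    (etaSeq B κ a - ∑ i ∈ S, c i • etaSeq B κ (v i)) = 0 ∧
    ((fun j => min (etaSeq B κ a j) 0) -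
      ∑ i ∈ S, c i • (fun j => min (etaSeq B κ (v i) j) 0)) = 0

/-- The family `b` is an `R`-spanning set for `B` (a family of vectors in `Rⁿ` such that every
`a ∈ Rⁿ` admits a `B`-coherent relation `a - Σ_{i ∈ S} c i • b i` with coefficients in `R`). -/
def SpanningOver {n : ℕ} (R : Subring ℝ) (B : Matrix (Fin n) (Fin n) ℤ) {ι : Type*}
    (b : ι → Fin n → ℝ) : Prop :=
  (∀ i j, b i j ∈ R) ∧
  ∀ a : Fin n → ℝ, (∀ j, a j ∈ R) →
    ∃ (S : Finset ι) (c : ι → ℝ), (∀ i ∈ S, c i ∈ R) ∧ IsBCoherentDiff B a S b c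

/-- The family `b` is an `R`-independent set for `B`. -/
def IndependentOver {n : ℕ} (R : Subring ℝ) (B : Matrix (Fin n) (Fin n) ℤ) {ι : Type*}
    (b : ι → Fin n → ℝ) : Prop :=
  (∀ i j, b i j ∈ R) ∧
  ∀ (S : Finset ι) (c : ι → ℝ), (∀ i ∈ S, c i ∈ R) → IsBCoherentRel B S b c →
    ∀ i ∈ S, c i = 0

/-- The family `b` is an `R`-basis for `B`. -/
def BasisOver {n : ℕ} (R : Subring ℝ) (B : Matrix (Fin n) (Fin n) ℤ) {ι : Type*}
    (b : ι → Fin n → ℝ) : Prop :=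
  SpanningOver R B b ∧ IndependentOver R B b

/-- The family `b` is a positive `R`-basis for `B`. -/
def PositiveBasisOver {n : ℕ} (R : Subring ℝ) (B : Matrix (Fin n) (Fin n) ℤ) {ι : Type*}
    (b : ι → Fin n → ℝ) : Prop :=
  BasisOver R B b ∧
  ∀ a : Fin n → ℝ, (∀ j, a j ∈ R) →
    ∃ (S : Finset ι) (c : ι → ℝ), (∀ i ∈ S, c i ∈ R ∧ 0 ≤ c i) ∧ IsBCoherentDiff B a S b c

/-- The relation `a ≡^B a'`: all mutation maps give componentwise equal signs. -/
def eqB {n : ℕ} (B : Matrix (Fin n) (Fin n) ℤ) (a a' : Fin n → ℝ) : Prop :=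
  ∀ (κ : List (Fin n)) (j : Fin n),
    Real.sign (etaSeq B κ a j) = Real.sign (etaSeq B κ a' j)

/-- A `B`-class: an equivalence class of `≡^B`. -/
def IsBClass {n : ℕ} (B : Matrix (Fin n) (Fin n) ℤ) (C : Set (Fin n → ℝ)) : Prop :=
  ∃ a, C = {a' | eqB B a a'}

/-- A `B`-cone: the closure of a `B`-class. -/
def IsBCone {n : ℕ} (B : Matrix (Fin n) (Fin n) ℤ) (C : Set (Fin n → ℝ)) : Prop :=
  ∃ D, IsBClass B D ∧ C = closure D

/-- A convex cone: a set closed under addition and positive scaling. -/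
def IsConvexCone {n : ℕ} (C : Set (Fin n → ℝ)) : Prop :=
  (∀ x ∈ C, ∀ y ∈ C, x + y ∈ C) ∧ ∀ x ∈ C, ∀ r : ℝ, 0 < r → r • x ∈ C

/-- `F` is a face of the convex cone `C`: a convex subset such that any line segment
contained in `C` whose interior meets `F` lies entirely in `F`. -/
def IsFaceOf {n : ℕ} (C F : Set (Fin n → ℝ)) : Prop :=
  F ⊆ C ∧ Convex ℝ F ∧
    ∀ x y : Fin n → ℝ, segment ℝ x y ⊆ C → (openSegment ℝ x y ∩ F).Nonempty →
      segment ℝ x y ⊆ F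

/-- The mutation fan `ℱ_B`: all `B`-cones and all faces of `B`-cones. -/
def MutFan {n : ℕ} (B : Matrix (Fin n) (Fin n) ℤ) : Set (Set (Fin n → ℝ)) :=
  {C | IsBCone B C ∨ ∃ D, IsBCone B D ∧ IsFaceOf D C}

/-- A fan: a collection of closed convex cones, closed under taking faces, in which the
intersection of any two cones is a face of each. -/
def IsFan {n : ℕ} (F : Set (Set (Fin n → ℝ))) : Prop :=
  (∀ C ∈ F, IsClosed C ∧ IsConvexCone C) ∧
  (∀ C ∈ F, ∀ G, IsFaceOf C G → G ∈ F) ∧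
  ∀ C ∈ F, ∀ D ∈ F, IsFaceOf C (C ∩ D) ∧ IsFaceOf D (C ∩ D)

/-- A set of vectors is sign-coherent if no two of its members have strictly opposite
signs in any coordinate. -/
def SignCoherentSet {n : ℕ} (S : Set (Fin n → ℝ)) : Prop :=
  ∀ x ∈ S, ∀ y ∈ S, ∀ j, ¬(x j < 0 ∧ 0 < y j)

/-- The ray spanned by a vector `v`. -/
def rayOf {n : ℕ} (v : Fin n → ℝ) : Set (Fin n → ℝ) :=
  {x | ∃ t : ℝ, 0 ≤ t ∧ x = t • v}

/-- `C` is a ray of the fan `F`: a one-dimensional cone belonging to `F`. -/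
def IsRayOf {n : ℕ} (F : Set (Set (Fin n → ℝ))) (C : Set (Fin n → ℝ)) : Prop :=
  C ∈ F ∧ ∃ v : Fin n → ℝ, v ≠ 0 ∧ C = rayOf v

/-- A simplicial cone: the nonnegative span of finitely many linearly independent vectors. -/
def IsSimplicialCone {n : ℕ} (C : Set (Fin n → ℝ)) : Prop :=
  ∃ (k : ℕ) (v : Fin k → Fin n → ℝ), LinearIndependent ℝ v ∧
    C = {x | ∃ c : Fin k → ℝ, (∀ i, 0 ≤ c i) ∧ x = ∑ i, c i • v i}

/-- A rational cone: the nonnegative span of finitely many rational vectors. -/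
def IsRationalCone {n : ℕ} (C : Set (Fin n → ℝ)) : Prop :=
  ∃ (k : ℕ) (v : Fin k → Fin n → ℝ), (∀ i j, ∃ q : ℚ, v i j = (q : ℝ)) ∧
    C = {x | ∃ c : Fin k → ℝ, (∀ i, 0 ≤ c i) ∧ x = ∑ i, c i • v i}

/-- `F'` is the rational part of the fan `F`. -/
def IsRationalPart {n : ℕ} (F F' : Set (Set (Fin n → ℝ))) : Prop :=
  IsFan F' ∧ (∀ C ∈ F', IsRationalCone C) ∧
  (∀ C ∈ F', ∃ D ∈ F, C ⊆ D) ∧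
  ∀ C ∈ F, ∃ D ∈ F', D ⊆ C ∧ (∀ D' ∈ F', D' ⊆ C → D' ⊆ D) ∧
    ∀ x ∈ C, (∀ j, ∃ q : ℚ, x j = (q : ℝ)) → x ∈ D

/-- `v` is the smallest nonzero integer vector in the cone `C`. -/
def IsSmallestIntVec {n : ℕ} (C : Set (Fin n → ℝ)) (v : Fin n → ℝ) : Prop :=
  v ∈ C ∧ v ≠ 0 ∧ (∀ j, ∃ m : ℤ, v j = (m : ℝ)) ∧
    ∀ w ∈ C, w ≠ 0 → (∀ j, ∃ m : ℤ, w j = (m : ℝ)) → ‖v‖ ≤ ‖w‖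

end MutationFanPaper

namespace MutationFanPaper


variable {n : ℕ}

lemma etaStep_apply (B : Matrix (Fin n) (Fin n) ℤ) (k : Fin n) (a : Fin n → ℝ) (j : Fin n) :
    etaStep B k a j = if j = k then -a k
      else a j + max (a k * (B k j : ℝ)) 0 * ((Int.sign (B k j) : ℤ) : ℝ) := by
  unfold etaStep
  by_cases hj : j = k
  · simp [hj]
  · simp only [hj, if_false]
    rcases lt_trichotomy (B k j) 0 with hb | hb | hb
    · have hbR : ((B k j : ℤ) : ℝ) < 0 := by exact_mod_cast hb
      have hs : Int.sign (B k j) = -1 := Int.sign_eq_neg_one_iff_neg.mpr hb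
      rcases le_or_gt (a k) 0 with ha | ha
      · have h1 : ¬ (0 ≤ a k ∧ 0 ≤ B k j) := by
          rintro ⟨-, h⟩; omega
        have h2 : a k ≤ 0 ∧ B k j ≤ 0 := ⟨ha, le_of_lt hb⟩
        have hm : max (a k * ((B k j : ℤ) : ℝ)) 0 = a k * ((B k j : ℤ) : ℝ) :=
          max_eq_left (by nlinarith)
        simp [h1, h2, hs, hm]; ring
      · have h1 : ¬ (0 ≤ a k ∧ 0 ≤ B k j) := by rintro ⟨-, h⟩; omega
        have h2 : ¬ (a k ≤ 0 ∧ B k j ≤ 0) := by rintro ⟨h, -⟩; linarith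
        have hm : max (a k * ((B k j : ℤ) : ℝ)) 0 = 0 := max_eq_right (by nlinarith)
        simp [h1, h2, hs, hm]
    · simp [hb]
    · have hbR : (0:ℝ) < ((B k j : ℤ) : ℝ) := by exact_mod_cast hb
      have hs : Int.sign (B k j) = 1 := Int.sign_eq_one_iff_pos.mpr hb
      rcases le_or_gt 0 (a k) with ha | ha
      · have h1 : 0 ≤ a k ∧ 0 ≤ B k j := ⟨ha, le_of_lt hb⟩
        have hm : max (a k * ((B k j : ℤ) : ℝ)) 0 = a k * ((B k j : ℤ) : ℝ) :=
          max_eq_left (by nlinarith)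
        simp [h1, hs, hm]
      · have h1 : ¬ (0 ≤ a k ∧ 0 ≤ B k j) := by rintro ⟨h, -⟩; linarith
        have h2 : ¬ (a k ≤ 0 ∧ B k j ≤ 0) := by rintro ⟨-, h⟩; omega
        have hm : max (a k * ((B k j : ℤ) : ℝ)) 0 = 0 := max_eq_right (by nlinarith)
        simp [h1, h2, hs, hm]

lemma continuous_etaStep (B : Matrix (Fin n) (Fin n) ℤ) (k : Fin n) :
    Continuous (etaStep B k) := by
  apply continuous_pi
  intro j
  have : (fun a : Fin n → ℝ => etaStep B k a j)
      = fun a => if j = k then -a k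
        else a j + max (a k * (B k j : ℝ)) 0 * ((Int.sign (B k j) : ℤ) : ℝ) :=
    funext fun a => etaStep_apply B k a j
  rw [this]
  by_cases hj : j = k <;> simp only [hj, if_true, if_false] <;> fun_prop

lemma continuous_etaSeq (B : Matrix (Fin n) (Fin n) ℤ) (κ : List (Fin n)) :
    Continuous (etaSeq B κ) := by
  induction κ generalizing B with
  | nil => exact continuous_id
  | cons k κ ih =>
    show Continuous fun a => etaSeq (mutate B k) κ (etaStep B k a)
    exact (ih (mutate B k)).comp (continuous_etaStep B k)

lemma etaStep_smul (B : Matrix (Fin n) (Fin n) ℤ) (k : Fin n) {r : ℝ} (hr : 0 ≤ r)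
    (a : Fin n → ℝ) : etaStep B k (r • a) = r • etaStep B k a := by
  funext j
  simp only [etaStep_apply, Pi.smul_apply, smul_eq_mul]
  by_cases hj : j = k
  · simp [hj]
  · simp only [hj, if_false]
    have : r * a k * ((B k j : ℤ) : ℝ) = r * (a k * ((B k j : ℤ) : ℝ)) := by ring
    rw [this, show r * (a k * ((B k j : ℤ) : ℝ)) ⊔ 0 = r * ((a k * ((B k j : ℤ) : ℝ)) ⊔ 0) by
      rw [mul_max_of_nonneg _ _ hr, mul_zero]]
    ring

lemma etaSeq_smul (B : Matrix (Fin n) (Fin n) ℤ) (κ : List (Fin n)) {r : ℝ} (hr : 0 ≤ r)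
    (a : Fin n → ℝ) : etaSeq B κ (r • a) = r • etaSeq B κ a := by
  induction κ generalizing B a with
  | nil => rfl
  | cons k κ ih =>
    show etaSeq (mutate B k) κ (etaStep B k (r • a)) = _
    rw [etaStep_smul B k hr a]
    exact ih (mutate B k) _

lemma etaSeq_zero (B : Matrix (Fin n) (Fin n) ℤ) (κ : List (Fin n)) :
    etaSeq B κ 0 = 0 := by
  have h := etaSeq_smul B κ (le_refl (0:ℝ)) 0
  simpa using h

lemma mul_sign_cases {u v : ℝ} (h : 0 ≤ u * v) : (0 ≤ u ∧ 0 ≤ v) ∨ (u ≤ 0 ∧ v ≤ 0) := by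
  rcases le_total 0 u with hu | hu <;> rcases le_total 0 v with hv | hv
  · exact Or.inl ⟨hu, hv⟩
  · have : u * v ≤ 0 := mul_nonpos_of_nonneg_of_nonpos hu hv
    have huv : u * v = 0 := le_antisymm this h
    rcases mul_eq_zero.mp huv with h0 | h0
    · exact Or.inr ⟨le_of_eq h0, hv⟩
    · exact Or.inl ⟨hu, le_of_eq h0.symm⟩
  · have : u * v ≤ 0 := mul_nonpos_of_nonpos_of_nonneg hu hv
    have huv : u * v = 0 := le_antisymm this h
    rcases mul_eq_zero.mp huv with h0 | h0
    · exact Or.inl ⟨le_of_eq h0.symm, hv⟩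
    · exact Or.inr ⟨hu, le_of_eq h0⟩
  · exact Or.inr ⟨hu, hv⟩

lemma max_add_of_mul_nonneg {u v : ℝ} (h : 0 ≤ u * v) :
    max (u + v) 0 = max u 0 + max v 0 := by
  rcases mul_sign_cases h with ⟨hu, hv⟩ | ⟨hu, hv⟩
  · rw [max_eq_left (by linarith), max_eq_left hu, max_eq_left hv]
  · rw [max_eq_right (by linarith), max_eq_right hu, max_eq_right hv]
    simp

lemma etaStep_add (B : Matrix (Fin n) (Fin n) ℤ) (k : Fin n) {x y : Fin n → ℝ}
    (h : 0 ≤ x k * y k) : etaStep B k (x + y) = etaStep B k x + etaStep B k y := by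
  funext j
  simp only [etaStep_apply, Pi.add_apply]
  by_cases hj : j = k
  · simp [hj]; ring
  · simp only [hj, if_false]
    have e1 : (x k + y k) * ((B k j : ℤ) : ℝ)
        = x k * ((B k j : ℤ) : ℝ) + y k * ((B k j : ℤ) : ℝ) := add_mul _ _ _
    have h2 : 0 ≤ (x k * ((B k j : ℤ) : ℝ)) * (y k * ((B k j : ℤ) : ℝ)) := by
      have := mul_nonneg h (sq_nonneg ((B k j : ℤ) : ℝ))
      nlinarith
    rw [e1, max_add_of_mul_nonneg h2]
    ring

lemma etaSeq_add (B : Matrix (Fin n) (Fin n) ℤ) {x y : Fin n → ℝ}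
    (h : ∀ κ j, 0 ≤ etaSeq B κ x j * etaSeq B κ y j) (κ : List (Fin n)) :
    etaSeq B κ (x + y) = etaSeq B κ x + etaSeq B κ y := by
  induction κ generalizing B x y with
  | nil => rfl
  | cons k κ ih =>
    show etaSeq (mutate B k) κ (etaStep B k (x + y)) = _
    have h0 : 0 ≤ x k * y k := h [] k
    rw [etaStep_add B k h0]
    exact ih (mutate B k) (fun κ' j => h (k :: κ') j)


variable {n : ℕ}

/-! ### Sign helpers -/

lemma sign_pos_iff {u : ℝ} : Real.sign u = 1 ↔ 0 < u := by
  constructor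
  · intro h
    rcases lt_trichotomy u 0 with hu | hu | hu
    · rw [Real.sign_of_neg hu] at h; norm_num at h
    · rw [hu, Real.sign_zero] at h; norm_num at h
    · exact hu
  · exact Real.sign_of_pos

lemma sign_neg_iff {u : ℝ} : Real.sign u = -1 ↔ u < 0 := by
  constructor
  · intro h
    rcases lt_trichotomy u 0 with hu | hu | hu
    · exact hu
    · rw [hu, Real.sign_zero] at h; norm_num at h
    · rw [Real.sign_of_pos hu] at h; norm_num at h
  · exact Real.sign_of_neg

lemma sign_imp {u v : ℝ} (h : Real.sign u = Real.sign v) :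
    (0 ≤ u → 0 ≤ v) ∧ (u ≤ 0 → v ≤ 0) := by
  rcases lt_trichotomy u 0 with hu | hu | hu
  · have hv : v < 0 := sign_neg_iff.mp ((Real.sign_of_neg hu) ▸ h).symm
    exact ⟨fun h' => absurd h' (not_le.mpr hu), fun _ => le_of_lt hv⟩
  · have hv : v = 0 := Real.sign_eq_zero_iff.mp (by rw [← h, hu, Real.sign_zero])
    exact ⟨fun _ => le_of_eq hv.symm, fun _ => le_of_eq hv⟩
  · have hv : 0 < v := sign_pos_iff.mp ((Real.sign_of_pos hu) ▸ h).symm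
    exact ⟨fun _ => le_of_lt hv, fun h' => absurd h' (not_le.mpr hu)⟩

/-! ### The domination relation: membership criterion for `B`-cones -/

def DomRel (B : Matrix (Fin n) (Fin n) ℤ) (a x : Fin n → ℝ) : Prop :=
  ∀ κ j, (0 ≤ etaSeq B κ a j → 0 ≤ etaSeq B κ x j) ∧
    (etaSeq B κ a j ≤ 0 → etaSeq B κ x j ≤ 0)

lemma eqB_domRel {B : Matrix (Fin n) (Fin n) ℤ} {a x : Fin n → ℝ} (h : eqB B a x) :
    DomRel B a x := fun κ j => sign_imp (h κ j)

lemma domRel_refl (B : Matrix (Fin n) (Fin n) ℤ) (a : Fin n → ℝ) : DomRel B a a :=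
  fun _ _ => ⟨id, id⟩

lemma domRel_mul_nonneg {B : Matrix (Fin n) (Fin n) ℤ} {a x y : Fin n → ℝ}
    (hx : DomRel B a x) (hy : DomRel B a y) (κ : List (Fin n)) (j : Fin n) :
    0 ≤ etaSeq B κ x j * etaSeq B κ y j := by
  rcases le_total 0 (etaSeq B κ a j) with h | h
  · exact mul_nonneg ((hx κ j).1 h) ((hy κ j).1 h)
  · have h1 := (hx κ j).2 h
    have h2 := (hy κ j).2 h
    nlinarith

lemma domRel_add {B : Matrix (Fin n) (Fin n) ℤ} {a x y : Fin n → ℝ}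
    (hx : DomRel B a x) (hy : DomRel B a y) : DomRel B a (x + y) := by
  intro κ j
  rw [etaSeq_add B (domRel_mul_nonneg hx hy) κ]
  constructor
  · intro h
    have := ((hx κ j).1 h); have := ((hy κ j).1 h)
    simp only [Pi.add_apply]; linarith
  · intro h
    have := ((hx κ j).2 h); have := ((hy κ j).2 h)
    simp only [Pi.add_apply]; linarith

lemma domRel_smul {B : Matrix (Fin n) (Fin n) ℤ} {a x : Fin n → ℝ}
    (hx : DomRel B a x) {r : ℝ} (hr : 0 ≤ r) : DomRel B a (r • x) := by
  intro κ j
  rw [etaSeq_smul B κ hr x]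
  refine ⟨fun h => ?_, fun h => ?_⟩
  · have := (hx κ j).1 h
    simp only [Pi.smul_apply, smul_eq_mul]
    exact mul_nonneg hr this
  · have := (hx κ j).2 h
    simp only [Pi.smul_apply, smul_eq_mul]
    exact mul_nonpos_of_nonneg_of_nonpos hr this

lemma domRel_zero (B : Matrix (Fin n) (Fin n) ℤ) (a : Fin n → ℝ) : DomRel B a 0 := by
  intro κ j
  rw [etaSeq_zero]
  simp

lemma convex_domSet (B : Matrix (Fin n) (Fin n) ℤ) (a : Fin n → ℝ) :
    Convex ℝ {x | DomRel B a x} := by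
  intro x hx y hy p q hp hq hpq
  exact domRel_add (domRel_smul hx hp) (domRel_smul hy hq)

lemma isClosed_domSet (B : Matrix (Fin n) (Fin n) ℤ) (a : Fin n → ℝ) :
    IsClosed {x | DomRel B a x} := by
  have : {x | DomRel B a x} = ⋂ (κ : List (Fin n)), ⋂ (j : Fin n),
      ({x | 0 ≤ etaSeq B κ a j → 0 ≤ etaSeq B κ x j} ∩
        {x | etaSeq B κ a j ≤ 0 → etaSeq B κ x j ≤ 0}) := by
    ext x
    simp only [Set.mem_setOf_eq, Set.mem_iInter, Set.mem_inter_iff, DomRel]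
  rw [this]
  refine isClosed_iInter fun κ => isClosed_iInter fun j => IsClosed.inter ?_ ?_
  · by_cases h : 0 ≤ etaSeq B κ a j
    · have : {x | 0 ≤ etaSeq B κ a j → 0 ≤ etaSeq B κ x j} = {x | 0 ≤ etaSeq B κ x j} := by
        ext x; simp [h]
      rw [this]
      exact isClosed_le continuous_const ((continuous_apply j).comp (continuous_etaSeq B κ))
    · have : {x | 0 ≤ etaSeq B κ a j → 0 ≤ etaSeq B κ x j} = Set.univ := by
        ext x; simp [h]
      rw [this]; exact isClosed_univ
  · by_cases h : etaSeq B κ a j ≤ 0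
    · have : {x | etaSeq B κ a j ≤ 0 → etaSeq B κ x j ≤ 0} = {x | etaSeq B κ x j ≤ 0} := by
        ext x; simp [h]
      rw [this]
      exact isClosed_le ((continuous_apply j).comp (continuous_etaSeq B κ)) continuous_const
    · have : {x | etaSeq B κ a j ≤ 0 → etaSeq B κ x j ≤ 0} = Set.univ := by
        ext x; simp [h]
      rw [this]; exact isClosed_univ

lemma closure_class_eq (B : Matrix (Fin n) (Fin n) ℤ) (a : Fin n → ℝ) :
    closure {x | eqB B a x} = {x | DomRel B a x} := by
  apply Set.Subset.antisymm
  · exact closure_minimal (fun y hy => eqB_domRel hy) (isClosed_domSet B a)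
  · intro x hx
    have key : ∀ t : ℝ, 0 < t → eqB B a (x + t • a) := by
      intro t ht
      have hta : DomRel B a (t • a) := domRel_smul (domRel_refl B a) (le_of_lt ht)
      have hadd : ∀ κ, etaSeq B κ (x + t • a) = etaSeq B κ x + etaSeq B κ (t • a) :=
        etaSeq_add B (domRel_mul_nonneg hx hta)
      intro κ j
      rw [hadd κ]
      have hsm : etaSeq B κ (t • a) = t • etaSeq B κ a := etaSeq_smul B κ (le_of_lt ht) a
      rw [hsm]
      simp only [Pi.add_apply, Pi.smul_apply, smul_eq_mul]
      rcases lt_trichotomy (etaSeq B κ a j) 0 with hc | hc | hc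
      · have h1 := (hx κ j).2 (le_of_lt hc)
        rw [Real.sign_of_neg hc, Eq.comm, sign_neg_iff]
        nlinarith
      · have h1 := (hx κ j).1 (le_of_eq hc.symm)
        have h2 := (hx κ j).2 (le_of_eq hc)
        have : etaSeq B κ x j = 0 := le_antisymm h2 h1
        rw [hc, this]
        simp
      · have h1 := (hx κ j).1 (le_of_lt hc)
        rw [Real.sign_of_pos hc, Eq.comm, sign_pos_iff]
        nlinarith
    have tend : Filter.Tendsto (fun m : ℕ => x + (1 / (m + 1) : ℝ) • a)
        Filter.atTop (nhds x) := by
      have h1 : Filter.Tendsto (fun m : ℕ => (1 / (m + 1) : ℝ)) Filter.atTop (nhds 0) :=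
        tendsto_one_div_add_atTop_nhds_zero_nat
      have h2 := h1.smul_const a
      rw [zero_smul] at h2
      have h3 := (tendsto_const_nhds (x := x) (f := Filter.atTop (α := ℕ))).add h2
      rw [add_zero] at h3
      exact h3
    exact mem_closure_of_tendsto tend (Filter.Eventually.of_forall fun m =>
      key _ (by positivity))

lemma isBCone_iff_domSet {B : Matrix (Fin n) (Fin n) ℤ} {C : Set (Fin n → ℝ)} :
    IsBCone B C ↔ ∃ a, C = {x | DomRel B a x} := by
  constructor
  · rintro ⟨D, ⟨a, rfl⟩, rfl⟩
    exact ⟨a, closure_class_eq B a⟩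
  · rintro ⟨a, rfl⟩
    exact ⟨{x | eqB B a x}, ⟨a, rfl⟩, (closure_class_eq B a).symm⟩


variable {n : ℕ}

/-! ### Generic face lemmas -/

lemma isFaceOf_self {C : Set (Fin n → ℝ)} (hC : Convex ℝ C) : IsFaceOf C C :=
  ⟨subset_rfl, hC, fun _ _ hs _ => hs⟩

lemma isFaceOf_trans {D C G : Set (Fin n → ℝ)} (h1 : IsFaceOf D C) (h2 : IsFaceOf C G) :
    IsFaceOf D G := by
  refine ⟨h2.1.trans h1.1, h2.2.1, fun x y hs hne => ?_⟩
  obtain ⟨z, hzo, hzG⟩ := hne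
  have hsC : segment ℝ x y ⊆ C := h1.2.2 x y hs ⟨z, hzo, h2.1 hzG⟩
  exact h2.2.2 x y hsC ⟨z, hzo, hzG⟩

/-- The intersection of two `B`-cones (in `DomRel` form) is a face of the first. -/
lemma dom_inter_face (B : Matrix (Fin n) (Fin n) ℤ) (a a' : Fin n → ℝ) :
    IsFaceOf {x | DomRel B a x} ({x | DomRel B a x} ∩ {x | DomRel B a' x}) := by
  refine ⟨Set.inter_subset_left, (convex_domSet B a).inter (convex_domSet B a'), ?_⟩
  intro x y hseg hne
  obtain ⟨z, hzo, hzS, hzS'⟩ := hne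
  obtain ⟨p, q, hp, hq, hpq, hz⟩ := hzo
  have hxS : DomRel B a x := hseg (left_mem_segment ℝ x y)
  have hyS : DomRel B a y := hseg (right_mem_segment ℝ x y)
  -- the mutation maps are linear on the segment
  have hcompat : ∀ κ j, 0 ≤ etaSeq B κ (p • x) j * etaSeq B κ (q • y) j := by
    intro κ j
    rw [etaSeq_smul B κ (le_of_lt hp) x, etaSeq_smul B κ (le_of_lt hq) y]
    simp only [Pi.smul_apply, smul_eq_mul]
    have := domRel_mul_nonneg hxS hyS κ j
    nlinarith [mul_nonneg (mul_nonneg hp.le hq.le) this]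
  have hz_eq : ∀ κ j, etaSeq B κ z j = p * etaSeq B κ x j + q * etaSeq B κ y j := by
    intro κ j
    rw [← hz, etaSeq_add B hcompat κ]
    simp only [Pi.add_apply]
    rw [etaSeq_smul B κ (le_of_lt hp) x, etaSeq_smul B κ (le_of_lt hq) y]
    simp
  -- the endpoints lie in the second cone
  have key : DomRel B a' x ∧ DomRel B a' y := by
    constructor <;> intro κ j <;>
    · have huv := domRel_mul_nonneg hxS hyS κ j
      have hw1 := (hzS' κ j).1
      have hw2 := (hzS' κ j).2
      rw [hz_eq κ j] at hw1 hw2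
      rcases mul_sign_cases huv with ⟨hu, hv⟩ | ⟨hu, hv⟩
      · refine ⟨fun _ => by assumption, fun hc => ?_⟩
        have := hw2 hc
        nlinarith
      · refine ⟨fun hc => ?_, fun _ => by assumption⟩
        have := hw1 hc
        nlinarith
  have hx' : x ∈ {x | DomRel B a x} ∩ {x | DomRel B a' x} := ⟨hxS, key.1⟩
  have hy' : y ∈ {x | DomRel B a x} ∩ {x | DomRel B a' x} := ⟨hyS, key.2⟩
  exact ((convex_domSet B a).inter (convex_domSet B a')).segment_subset hx' hy'

/-- If `C, D` are faces of `S, S'` and `S ∩ S'` is a common face, then `C ∩ D` is a face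
of `C`. -/
lemma inter_face_of_faces {S S' C D : Set (Fin n → ℝ)}
    (hC : IsFaceOf S C) (hD : IsFaceOf S' D)
    (hSS' : IsFaceOf S (S ∩ S')) : IsFaceOf C (C ∩ D) := by
  refine ⟨Set.inter_subset_left, hC.2.1.inter hD.2.1, ?_⟩
  intro x y hs hne
  obtain ⟨z, hzo, hzC, hzD⟩ := hne
  have hsC : segment ℝ x y ⊆ C := hs
  have hsSS' : segment ℝ x y ⊆ S ∩ S' :=
    hSS'.2.2 x y (hsC.trans hC.1) ⟨z, hzo, hC.1 hzC, hD.1 hzD⟩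
  have hsD : segment ℝ x y ⊆ D :=
    hD.2.2 x y (fun w hw => (hsSS' hw).2) ⟨z, hzo, hzD⟩
  exact fun w hw => ⟨hsC hw, hsD hw⟩

/-! ### Faces of `B`-cones are closed convex cones -/

lemma face_smul_mem {B : Matrix (Fin n) (Fin n) ℤ} {a : Fin n → ℝ} {F : Set (Fin n → ℝ)}
    (hF : IsFaceOf {x | DomRel B a x} F) {x : Fin n → ℝ} (hx : x ∈ F) {r : ℝ} (hr : 0 ≤ r) :
    r • x ∈ F := by
  by_cases hx0 : x = 0
  · have : r • x = x := by rw [hx0, smul_zero]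
    rwa [this]
  · have hxS : DomRel B a x := hF.1 hx
    set w : Fin n → ℝ := (r + 2) • x with hw
    have hr2 : (0:ℝ) < r + 2 := by linarith
    have hseg : segment ℝ 0 w ⊆ {x | DomRel B a x} := by
      intro z hz
      rw [segment_eq_image] at hz
      obtain ⟨θ, hθ, rfl⟩ := hz
      simp only [hw, smul_zero, zero_add, smul_smul]
      exact domRel_smul hxS (mul_nonneg hθ.1 (le_of_lt hr2))
    have hmem : x ∈ openSegment ℝ 0 w ∩ F := by
      refine ⟨?_, hx⟩
      rw [openSegment_eq_image]
      refine ⟨(r + 2)⁻¹, ⟨by positivity, ?_⟩, ?_⟩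
      · rw [inv_lt_one_iff₀]; right; linarith
      · simp only [hw, smul_zero, zero_add, smul_smul]
        rw [inv_mul_cancel₀ (ne_of_gt hr2), one_smul]
    have hsub : segment ℝ 0 w ⊆ F := hF.2.2 0 w hseg ⟨x, hmem⟩
    apply hsub
    rw [segment_eq_image]
    refine ⟨r / (r + 2), ⟨by positivity, by rw [div_le_one hr2]; linarith⟩, ?_⟩
    simp only [hw, smul_zero, zero_add, smul_smul]
    rw [div_mul_cancel₀ _ (ne_of_gt hr2)]

lemma face_add_mem {B : Matrix (Fin n) (Fin n) ℤ} {a : Fin n → ℝ} {F : Set (Fin n → ℝ)}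
    (hF : IsFaceOf {x | DomRel B a x} F) {x y : Fin n → ℝ} (hx : x ∈ F) (hy : y ∈ F) :
    x + y ∈ F := by
  have hm : (1/2 : ℝ) • x + (1/2 : ℝ) • y ∈ F :=
    hF.2.1 hx hy (by norm_num) (by norm_num) (by norm_num)
  have h2 : (2:ℝ) • ((1/2 : ℝ) • x + (1/2 : ℝ) • y) = x + y := by
    rw [smul_add, smul_smul, smul_smul]
    norm_num
  have := face_smul_mem hF hm (by norm_num : (0:ℝ) ≤ 2)
  rwa [h2] at this

lemma face_isClosed {C F : Set (Fin n → ℝ)} (hF : IsFaceOf C F)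
    (hCc : IsClosed C) (hCconv : Convex ℝ C) : IsClosed F := by
  rcases F.eq_empty_or_nonempty with rfl | hne
  · exact isClosed_empty
  apply isClosed_of_closure_subset
  intro x hx
  obtain ⟨y, hy⟩ := Set.Nonempty.intrinsicInterior hF.2.1 hne
  have hyF : y ∈ F := intrinsicInterior_subset hy
  by_cases hxy : x = y
  · rwa [hxy]
  obtain ⟨w, hw, hwy⟩ := hy
  have hspanclosed : IsClosed ((affineSpan ℝ F : Set (Fin n → ℝ))) :=
    (affineSpan ℝ F).closed_of_finiteDimensional
  have hxspan : x ∈ affineSpan ℝ F := by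
    have h1 : closure F ⊆ closure (affineSpan ℝ F : Set (Fin n → ℝ)) :=
      closure_mono (subset_affineSpan ℝ F)
    have := h1 hx
    rwa [hspanclosed.closure_eq] at this
  have hyspan : y ∈ affineSpan ℝ F := subset_affineSpan ℝ F hyF
  have hmemcurve : ∀ t : ℝ, y + t • (y - x) ∈ affineSpan ℝ F := by
    intro t
    have := AffineSubspace.smul_vsub_vadd_mem (affineSpan ℝ F) t hyspan hxspan hyspan
    simpa [vsub_eq_sub, vadd_eq_add, add_comm] using this
  set γ : ℝ → (affineSpan ℝ F : Set (Fin n → ℝ)) := fun t => ⟨y + t • (y - x), hmemcurve t⟩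
    with hγ
  have hγcont : Continuous γ := by
    apply Continuous.subtype_mk
    fun_prop
  have hγ0 : γ 0 = ⟨y, hyspan⟩ := by
    apply Subtype.ext
    simp [hγ]
  have hw0 : γ 0 ∈ interior ((Subtype.val) ⁻¹' F :
      Set (affineSpan ℝ F : Set (Fin n → ℝ))) := by
    rw [hγ0]
    have : w = (⟨y, hyspan⟩ : (affineSpan ℝ F : Set (Fin n → ℝ))) := Subtype.ext hwy
    rwa [← this]
  have hpre : γ ⁻¹' (interior ((Subtype.val) ⁻¹' F)) ∈ nhds (0:ℝ) :=
    hγcont.continuousAt.preimage_mem_nhds (isOpen_interior.mem_nhds hw0)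
  obtain ⟨ε, hε, hball⟩ := Metric.mem_nhds_iff.mp hpre
  set t : ℝ := ε / 2 with ht
  have htpos : 0 < t := by positivity
  have htball : t ∈ Metric.ball (0:ℝ) ε := by
    rw [Metric.mem_ball, dist_zero_right, Real.norm_eq_abs, abs_of_pos htpos]
    rw [ht]; linarith
  have hzmemF : y + t • (y - x) ∈ F := by
    have := interior_subset (hball htball)
    simpa using this
  set z : Fin n → ℝ := y + t • (y - x) with hzdef
  have hy_open : y ∈ openSegment ℝ x z := by
    refine ⟨t / (1 + t), 1 / (1 + t), by positivity, by positivity, ?_, ?_⟩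
    · field_simp
      ring
    · rw [hzdef]
      have h1t : (1 + t) ≠ 0 := by positivity
      funext i
      simp only [Pi.add_apply, Pi.smul_apply, Pi.sub_apply, smul_eq_mul]
      field_simp
      ring
  have hxC : x ∈ C := by
    have : closure F ⊆ closure C := closure_mono hF.1
    have := this hx
    rwa [hCc.closure_eq] at this
  have hseg : segment ℝ x z ⊆ C := hCconv.segment_subset hxC (hF.1 hzmemF)
  have : segment ℝ x z ⊆ F := hF.2.2 x z hseg ⟨y, hy_open, hyF⟩
  exact this (left_mem_segment ℝ x z)


variable {n : ℕ}

lemma mem_mutFan_elim {B : Matrix (Fin n) (Fin n) ℤ} {C : Set (Fin n → ℝ)}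
    (hC : C ∈ MutFan B) : ∃ a, IsFaceOf {x | DomRel B a x} C := by
  rcases hC with hC | ⟨D, hD, hface⟩
  · obtain ⟨a, rfl⟩ := isBCone_iff_domSet.mp hC
    exact ⟨a, isFaceOf_self (convex_domSet B a)⟩
  · obtain ⟨a, rfl⟩ := isBCone_iff_domSet.mp hD
    exact ⟨a, hface⟩


/-- The mutation fan `ℱ_B` is a complete fan. -/
theorem mutFan_isCompleteFan {n : ℕ} (hn : 1 ≤ n) (B : Matrix (Fin n) (Fin n) ℤ)
    (hB : IsExchangeMatrix B) :
    (∀ C ∈ MutFan B, IsClosed C ∧ IsConvexCone C) ∧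
    (∀ C ∈ MutFan B, ∀ G, IsFaceOf C G → G ∈ MutFan B) ∧
    (∀ C ∈ MutFan B, ∀ D ∈ MutFan B, IsFaceOf C (C ∩ D) ∧ IsFaceOf D (C ∩ D)) ∧
    ⋃₀ MutFan B = Set.univ := by
  refine ⟨?_, ?_, ?_, ?_⟩
  · intro C hC
    obtain ⟨a, hface⟩ := mem_mutFan_elim hC
    exact ⟨face_isClosed hface (isClosed_domSet B a) (convex_domSet B a),
      fun x hx y hy => face_add_mem hface hx hy,
      fun x hx r hr => face_smul_mem hface hx hr.le⟩
  · intro C hC G hG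
    rcases hC with hC | ⟨D, hD, hface⟩
    · exact Or.inr ⟨C, hC, hG⟩
    · exact Or.inr ⟨D, hD, isFaceOf_trans hface hG⟩
  · intro C hC D hD
    obtain ⟨a, hCf⟩ := mem_mutFan_elim hC
    obtain ⟨a', hDf⟩ := mem_mutFan_elim hD
    refine ⟨inter_face_of_faces hCf hDf (dom_inter_face B a a'), ?_⟩
    have := inter_face_of_faces hDf hCf (dom_inter_face B a' a)
    rwa [Set.inter_comm] at this
  · ext x
    simp only [Set.mem_sUnion, Set.mem_univ, iff_true]
    exact ⟨closure {a' | eqB B x a'}, Or.inl ⟨{a' | eqB B x a'}, ⟨x, rfl⟩, rfl⟩,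
      subset_closure (fun κ j => rfl)⟩

end MutationFanPaper
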